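/- arXiv:math/0504508 — 2 statements merged into one kernel-verified Lean document; each statement's English description precedes it below -/
import Mathlib

section
/- Let z be a standard normal random variable, θ ≥ 0 a real number, and y = θ + z. Then for any c ≥ 0, the function θ ↦ E[y² · 1{|y| > c}] is nondecreasing in θ on [0, ∞). -/
open MeasureTheory Real Set

lemma aux_int_abs_pow (n : ℕ) {b : ℝ} (hb : 0 < b) :
    Integrable (fun x : ℝ => |x| ^ n * Real.exp (-b * x ^ 2)) := by
  have h2 : Integrable (fun x : ℝ => ((n.factorial : ℝ) * Real.exp (1 / (2 * b))) *
      Real.exp (-(b/2) * x ^ 2)) :=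
    (integrable_exp_neg_mul_sq (by linarith)).const_mul _
  refine h2.mono' ?_ ?_
  · exact ((continuous_abs.pow n).mul
      ((continuous_const.mul (continuous_pow 2)).rexp)).aestronglyMeasurable
  · filter_upwards with x
    have h3 : |x| ^ n ≤ n.factorial * Real.exp |x| := by
      have h := Real.pow_div_factorial_le_exp |x| (abs_nonneg x) n
      have hf : (0:ℝ) < n.factorial := by exact_mod_cast n.factorial_pos
      rw [div_le_iff₀ hf] at h
      linarith [h]
    have h4 : Real.exp |x| * Real.exp (-b * x ^ 2) ≤
        Real.exp (1 / (2 * b)) * Real.exp (-(b/2) * x ^ 2) := by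
      rw [← Real.exp_add, ← Real.exp_add]
      apply Real.exp_le_exp.2
      have e : 1/(2*b) + (b/2)*x^2 - |x| = (b*|x| - 1)^2 / (2*b) := by
        field_simp; linear_combination (-b^2) * sq_abs x
      nlinarith [div_nonneg (sq_nonneg (b*|x| - 1)) (by linarith : (0:ℝ) ≤ 2*b)]
    have hnorm : ‖|x| ^ n * Real.exp (-b * x ^ 2)‖ = |x| ^ n * Real.exp (-b * x ^ 2) := by
      rw [Real.norm_eq_abs, abs_of_nonneg (by positivity)]
    rw [hnorm]
    calc |x| ^ n * Real.exp (-b * x ^ 2)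
        ≤ (n.factorial * Real.exp |x|) * Real.exp (-b * x ^ 2) := by
          exact mul_le_mul_of_nonneg_right h3 (Real.exp_pos _).le
      _ = n.factorial * (Real.exp |x| * Real.exp (-b * x ^ 2)) := by ring
      _ ≤ n.factorial * (Real.exp (1 / (2 * b)) * Real.exp (-(b/2) * x ^ 2)) := by
          apply mul_le_mul_of_nonneg_left h4 (by positivity)
      _ = ((n.factorial : ℝ) * Real.exp (1 / (2 * b))) * Real.exp (-(b/2) * x ^ 2) := by ring

/-- Integrability of |y|^n * exp(-(y-θ)^2/2). -/
lemma aux_int_shift (n : ℕ) (θ : ℝ) :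
    Integrable (fun y : ℝ => |y| ^ n * Real.exp (-(y - θ) ^ 2 / 2)) := by
  have h2 : Integrable (fun y : ℝ => Real.exp (θ ^ 2 / 2) *
      (|y| ^ n * Real.exp (-(1/4 : ℝ) * y ^ 2))) :=
    (aux_int_abs_pow n (by norm_num)).const_mul _
  refine h2.mono' ?_ ?_
  · apply Continuous.aestronglyMeasurable
    apply (continuous_abs.pow n).mul
    apply Real.continuous_exp.comp
    fun_prop
  · filter_upwards with y
    have h4 : Real.exp (-(y - θ) ^ 2 / 2) ≤
        Real.exp (θ ^ 2 / 2) * Real.exp (-(1/4 : ℝ) * y ^ 2) := by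
      rw [← Real.exp_add]
      apply Real.exp_le_exp.2
      nlinarith [sq_nonneg (y / 2 - θ)]
    rw [Real.norm_eq_abs, abs_of_nonneg (by positivity)]
    calc |y| ^ n * Real.exp (-(y - θ) ^ 2 / 2)
        ≤ |y| ^ n * (Real.exp (θ ^ 2 / 2) * Real.exp (-(1/4 : ℝ) * y ^ 2)) :=
          mul_le_mul_of_nonneg_left h4 (by positivity)
      _ = Real.exp (θ ^ 2 / 2) * (|y| ^ n * Real.exp (-(1/4 : ℝ) * y ^ 2)) := by ring


lemma aux_measS (c : ℝ) : MeasurableSet {y : ℝ | c < |y|} :=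
  measurableSet_lt measurable_const continuous_abs.measurable

lemma aux_hasDeriv (c : ℝ) (θ₀ : ℝ) :
    HasDerivAt (fun θ => ∫ y in {y : ℝ | c < |y|}, y ^ 2 * Real.exp (-(y - θ) ^ 2 / 2))
      (∫ y in {y : ℝ | c < |y|}, y ^ 2 * (y - θ₀) * Real.exp (-(y - θ₀) ^ 2 / 2)) θ₀ := by
  set M : ℝ := |θ₀| + 1 with hM
  have hM0 : 0 ≤ M := by positivity
  have hbound_int : Integrable (fun y : ℝ => Real.exp (M ^ 2 / 2) *
      (|y| ^ 3 * Real.exp (-(1/4 : ℝ) * y ^ 2) + M * (|y| ^ 2 * Real.exp (-(1/4 : ℝ) * y ^ 2))))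
      (volume.restrict {y : ℝ | c < |y|}) := by
    refine Integrable.restrict ?_
    exact (((aux_int_abs_pow 3 (by norm_num)).add
      ((aux_int_abs_pow 2 (by norm_num)).const_mul M)).const_mul _)
  have key := hasDerivAt_integral_of_dominated_loc_of_deriv_le (s := Metric.ball θ₀ 1)
    (μ := volume.restrict {y : ℝ | c < |y|})
    (F := fun θ y => y ^ 2 * Real.exp (-(y - θ) ^ 2 / 2))
    (F' := fun θ y => y ^ 2 * (y - θ) * Real.exp (-(y - θ) ^ 2 / 2))
    (x₀ := θ₀)
    (bound := fun y => Real.exp (M ^ 2 / 2) *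
      (|y| ^ 3 * Real.exp (-(1/4 : ℝ) * y ^ 2) + M * (|y| ^ 2 * Real.exp (-(1/4 : ℝ) * y ^ 2))))
    (Metric.ball_mem_nhds θ₀ one_pos) ?_ ?_ ?_ ?_ hbound_int ?_
  · exact key.2
  · filter_upwards with θ
    exact (Continuous.aestronglyMeasurable (by fun_prop)).restrict
  · have : Integrable (fun y : ℝ => y ^ 2 * Real.exp (-(y - θ₀) ^ 2 / 2)) := by
      simpa [sq_abs] using aux_int_shift 2 θ₀
    exact this.restrict
  · exact (Continuous.aestronglyMeasurable (by fun_prop)).restrict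
  · filter_upwards with y
    intro θ hθ
    rw [Metric.mem_ball, Real.dist_eq] at hθ
    have hθM : |θ| ≤ M := by
      have := abs_sub_abs_le_abs_sub θ θ₀
      rw [hM]; linarith [le_of_lt hθ]
    have hθ2 : θ ^ 2 ≤ M ^ 2 := by
      have := sq_abs θ
      nlinarith [abs_nonneg θ]
    have e1 : Real.exp (-(y - θ) ^ 2 / 2) ≤ Real.exp (M ^ 2 / 2) *
        Real.exp (-(1/4 : ℝ) * y ^ 2) := by
      rw [← Real.exp_add]
      apply Real.exp_le_exp.2
      nlinarith [sq_nonneg (y - 2 * θ)]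
    have e2 : |y - θ| ≤ |y| + M := by
      calc |y - θ| ≤ |y| + |θ| := abs_sub y θ
        _ ≤ |y| + M := by linarith
    rw [Real.norm_eq_abs, abs_mul, abs_mul, abs_of_nonneg (Real.exp_pos _).le, abs_pow, sq_abs]
    calc y ^ 2 * |y - θ| * Real.exp (-(y - θ) ^ 2 / 2)
        ≤ (y ^ 2 * (|y| + M)) * (Real.exp (M ^ 2 / 2) * Real.exp (-(1/4 : ℝ) * y ^ 2)) := by
          apply mul_le_mul (mul_le_mul_of_nonneg_left e2 (sq_nonneg y)) e1
            (Real.exp_pos _).le (by positivity)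
      _ = Real.exp (M ^ 2 / 2) * (|y| ^ 3 * Real.exp (-(1/4 : ℝ) * y ^ 2) +
          M * (y ^ 2 * Real.exp (-(1/4 : ℝ) * y ^ 2))) := by
          rw [show |y| ^ 3 = |y| ^ 2 * |y| from by ring, sq_abs]; ring
  · filter_upwards with y
    intro θ hθ
    have h1 : HasDerivAt (fun θ : ℝ => -(y - θ) ^ 2 / 2) (y - θ) θ := by
      have h0 : HasDerivAt (fun θ : ℝ => y - θ) (-1) θ := (hasDerivAt_id θ).const_sub y
      have := ((h0.pow 2).neg).div_const 2
      exact this.congr_deriv (by norm_num)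
    have h2 := h1.exp
    have h3 := h2.const_mul (y ^ 2)
    exact h3.congr_deriv (by ring)


lemma aux_deriv_nonneg (c : ℝ) (θ : ℝ) (hθ : 0 ≤ θ) :
    0 ≤ ∫ y in {y : ℝ | c < |y|}, y ^ 2 * (y - θ) * Real.exp (-(y - θ) ^ 2 / 2) := by
  set f : ℝ → ℝ := fun y => y ^ 2 * (y - θ) * Real.exp (-(y - θ) ^ 2 / 2) with hf
  set T : Set ℝ := {u : ℝ | c < |u + θ|} with hT
  have hTmeas : MeasurableSet T :=
    measurableSet_lt measurable_const ((continuous_id.add continuous_const).abs.measurable)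
  set g : ℝ → ℝ := T.indicator (fun t => (t + θ) ^ 2 * t * Real.exp (-t ^ 2 / 2)) with hg
  -- inner function integrable
  have hinner : Integrable (fun t : ℝ => (t + θ) ^ 2 * t * Real.exp (-t ^ 2 / 2)) := by
    have hb : Integrable (fun t : ℝ => |t| ^ 3 * Real.exp (-(1/2 : ℝ) * t ^ 2) +
        (2 * |θ|) * (|t| ^ 2 * Real.exp (-(1/2 : ℝ) * t ^ 2)) +
        θ ^ 2 * (|t| ^ 1 * Real.exp (-(1/2 : ℝ) * t ^ 2))) :=
      ((aux_int_abs_pow 3 (by norm_num)).add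
        ((aux_int_abs_pow 2 (by norm_num)).const_mul _)).add
        ((aux_int_abs_pow 1 (by norm_num)).const_mul _)
    refine hb.mono' (Continuous.aestronglyMeasurable (by fun_prop)) ?_
    filter_upwards with t
    have hE : -t ^ 2 / 2 = -(1/2 : ℝ) * t ^ 2 := by ring
    rw [Real.norm_eq_abs, abs_mul, abs_mul, abs_of_nonneg (Real.exp_pos _).le, hE]
    have h1 : |(t + θ) ^ 2| ≤ (|t| + |θ|) ^ 2 := by
      rw [abs_pow, sq_abs]
      have := abs_add_le t θ
      nlinarith [abs_nonneg (t + θ), abs_nonneg t, abs_nonneg θ, sq_abs (t + θ)]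
    calc |(t + θ) ^ 2| * |t| * Real.exp (-(1/2 : ℝ) * t ^ 2)
        ≤ (|t| + |θ|) ^ 2 * |t| * Real.exp (-(1/2 : ℝ) * t ^ 2) := by
          apply mul_le_mul_of_nonneg_right (mul_le_mul_of_nonneg_right h1 (abs_nonneg t))
            (Real.exp_pos _).le
      _ = |t| ^ 3 * Real.exp (-(1/2 : ℝ) * t ^ 2) +
          (2 * |θ|) * (|t| ^ 2 * Real.exp (-(1/2 : ℝ) * t ^ 2)) +
          θ ^ 2 * (|t| ^ 1 * Real.exp (-(1/2 : ℝ) * t ^ 2)) := by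
          rw [← sq_abs θ]; ring
  have hg_int : Integrable g := hinner.indicator hTmeas
  -- the set integral equals ∫ g
  have hstep : ∫ y in {y : ℝ | c < |y|}, f y = ∫ t, g t := by
    rw [← integral_indicator (aux_measS c)]
    rw [← integral_add_right_eq_self (({y : ℝ | c < |y|}).indicator f) θ]
    congr 1
    funext t
    by_cases h : c < |t + θ|
    · rw [Set.indicator_of_mem (show t + θ ∈ {y : ℝ | c < |y|} from h), hg,
        Set.indicator_of_mem (show t ∈ T from h)]
      simp only [hf, add_sub_cancel_right]
    · rw [Set.indicator_of_notMem (show t + θ ∉ {y : ℝ | c < |y|} from h), hg,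
        Set.indicator_of_notMem (show t ∉ T from h)]
  -- pointwise symmetrized nonnegativity
  have hpt : ∀ t : ℝ, 0 ≤ g t + g (-t) := by
    intro t
    simp only [hg, Set.indicator_apply, hT, mem_setOf_eq]
    have hE := Real.exp_pos (-t ^ 2 / 2)
    have hE' : Real.exp (-(-t) ^ 2 / 2) = Real.exp (-t ^ 2 / 2) := by rw [neg_sq]
    rw [hE']
    split_ifs with h1 h2 h2
    · have : (t + θ) ^ 2 * t * Real.exp (-t ^ 2 / 2) +
          (-t + θ) ^ 2 * (-t) * Real.exp (-t ^ 2 / 2) =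
          4 * θ * t ^ 2 * Real.exp (-t ^ 2 / 2) := by ring
      rw [this]; positivity
    · -- h1 : c < |t+θ|, h2 : ¬ c < |-t+θ|; need t ≥ 0
      push_neg at h2
      have ht : 0 ≤ t := by
        by_contra hcon
        push_neg at hcon
        have e1 : |t + θ| ≤ |t| + |θ| := abs_add_le t θ
        have e2 : |t| = -t := abs_of_neg hcon
        have e3 : |θ| = θ := abs_of_nonneg hθ
        have e4 : |-t + θ| = -t + θ := abs_of_nonneg (by linarith)
        linarith
      rw [add_zero]
      exact mul_nonneg (mul_nonneg (sq_nonneg _) ht) (Real.exp_pos _).le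
    · -- h1 : ¬ c < |t+θ|, h2 : c < |-t+θ|; need t ≤ 0
      push_neg at h1
      have ht : t ≤ 0 := by
        by_contra hcon
        push_neg at hcon
        have e1 : |-t + θ| ≤ |-t| + |θ| := abs_add_le (-t) θ
        have e2 : |-t| = t := by rw [abs_neg, abs_of_pos hcon]
        have e3 : |θ| = θ := abs_of_nonneg hθ
        have e4 : |t + θ| = t + θ := abs_of_nonneg (by linarith)
        linarith
      rw [zero_add]
      exact mul_nonneg (mul_nonneg (sq_nonneg _) (by linarith)) (Real.exp_pos _).le
    · simp
  have h2 : 0 ≤ ∫ t, (g t + g (-t)) := integral_nonneg hpt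
  have h3 : ∫ t, (g t + g (-t)) = 2 * ∫ t, g t := by
    rw [integral_add hg_int hg_int.comp_neg, integral_neg_eq_self]
    ring
  rw [hstep]
  linarith [h2, h3]


/-- For `y = θ + z` with `z ~ N(0,1)`, the map
`θ ↦ E[y² · 1{|y| > c}] = (1/√(2π)) ∫_{|y|>c} y² exp(-(y-θ)²/2) dy`
is nondecreasing in `θ` on `[0, ∞)`, for every `c ≥ 0`. -/
theorem stmt0 (c : ℝ) (hc : 0 ≤ c) (θ₁ θ₂ : ℝ) (h1 : 0 ≤ θ₁) (h12 : θ₁ ≤ θ₂) :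
    (1 / Real.sqrt (2 * Real.pi)) *
        ∫ y in {y : ℝ | c < |y|}, y ^ 2 * Real.exp (-(y - θ₁) ^ 2 / 2) ≤
      (1 / Real.sqrt (2 * Real.pi)) *
        ∫ y in {y : ℝ | c < |y|}, y ^ 2 * Real.exp (-(y - θ₂) ^ 2 / 2) := by
  have hmono : MonotoneOn
      (fun θ => ∫ y in {y : ℝ | c < |y|}, y ^ 2 * Real.exp (-(y - θ) ^ 2 / 2)) (Set.Ici 0) := by
    apply monotoneOn_of_deriv_nonneg (convex_Ici 0)
    · intro θ _
      exact (aux_hasDeriv c θ).continuousAt.continuousWithinAt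
    · intro θ _
      exact (aux_hasDeriv c θ).differentiableAt.differentiableWithinAt
    · intro θ hθ
      rw [interior_Ici] at hθ
      rw [(aux_hasDeriv c θ).deriv]
      exact aux_deriv_nonneg c θ (le_of_lt hθ)
  have hle := hmono (Set.mem_Ici.2 h1) (Set.mem_Ici.2 (h1.trans h12)) h12
  exact mul_le_mul_of_nonneg_left hle (by positivity)
end

section
/- Let y = θ + σz with z ~ N(0,1), σ > 0, and define the soft-threshold estimator δ = sgn(y)(|y| - σt)₊ for threshold level t = √(2 log B) with B > 1. Then E[(δ - θ)²] ≤ min{2θ², σ²(1 + 2 log B)} + σ²/B. -/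
open MeasureTheory ProbabilityTheory Real
open scoped NNReal ENNReal

namespace Stmt8Aux

lemma pdf_eq (x : ℝ) :
    gaussianPDFReal 0 1 x = (Real.sqrt (2 * π))⁻¹ * Real.exp (-x ^ 2 / 2) := by
  simp [gaussianPDFReal]

lemma integral_gauss (g : ℝ → ℝ) :
    ∫ z, g z ∂(gaussianReal 0 1) = ∫ z, gaussianPDFReal 0 1 z * g z := by
  rw [gaussianReal_of_var_ne_zero _ one_ne_zero]
  have h : volume.withDensity (gaussianPDF 0 1)
      = volume.withDensity (fun x => ((Real.toNNReal (gaussianPDFReal 0 1 x) : ℝ≥0) : ℝ≥0∞)) := rfl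
  rw [h, integral_withDensity_eq_integral_smul
    ((measurable_gaussianPDFReal 0 1).real_toNNReal) g]
  congr 1
  ext z
  rw [NNReal.smul_def, smul_eq_mul, Real.coe_toNNReal _ (gaussianPDFReal_nonneg 0 1 z)]

lemma integrable_exp_half : Integrable (fun x : ℝ => Real.exp (-x ^ 2 / 2)) := by
  have h := integrable_exp_neg_mul_sq (b := (1:ℝ)/2) (by norm_num)
  convert h using 2 with x
  ring_nf

lemma integrable_sq_exp : Integrable (fun x : ℝ => x ^ 2 * Real.exp (-x ^ 2 / 2)) := by
  have h := integrable_rpow_mul_exp_neg_mul_sq (b := (1:ℝ)/2) (by norm_num) (s := 2) (by norm_num)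
  have e : (fun x : ℝ => x ^ 2 * Real.exp (-x ^ 2 / 2))
      = fun x : ℝ => x ^ (2:ℝ) * Real.exp (-(1/2) * x ^ 2) := by
    funext x
    have hx : x ^ (2:ℝ) = x ^ (2:ℕ) := by
      rw [show (2:ℝ) = ((2:ℕ):ℝ) by norm_num]
      exact Real.rpow_natCast x 2
    rw [hx]
    ring_nf
  rw [e]; exact h

lemma integrable_mul_exp_half : Integrable (fun x : ℝ => x * Real.exp (-x ^ 2 / 2)) := by
  have h := integrable_mul_exp_neg_mul_sq (b := (1:ℝ)/2) (by norm_num)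
  convert h using 2 with x
  ring_nf

lemma exp_integral : ∫ x : ℝ, Real.exp (-x ^ 2 / 2) = Real.sqrt (2 * π) := by
  have h := integral_gaussian ((1:ℝ)/2)
  rw [show π / ((1:ℝ)/2) = 2 * π by ring] at h
  rw [← h]
  congr 1
  funext x
  ring_nf

lemma sq_exp_integral : ∫ x : ℝ, x ^ 2 * Real.exp (-x ^ 2 / 2) = Real.sqrt (2 * π) := by
  have hderiv : ∀ x : ℝ, HasDerivAt (fun x : ℝ => x * Real.exp (-x ^ 2 / 2))
      (Real.exp (-x ^ 2 / 2) - x ^ 2 * Real.exp (-x ^ 2 / 2)) x := by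
    intro x
    have h1 : HasDerivAt (fun x : ℝ => -x ^ 2 / 2) (-x) x := by
      have := ((hasDerivAt_pow 2 x).neg.div_const 2)
      refine this.congr_deriv ?_
      push_cast
      ring
    have h2 := h1.exp
    have h3 := (hasDerivAt_id x).mul h2
    simp only [id_eq] at h3
    refine h3.congr_deriv ?_
    ring
  have hint : Integrable (fun x : ℝ =>
      Real.exp (-x ^ 2 / 2) - x ^ 2 * Real.exp (-x ^ 2 / 2)) :=
    integrable_exp_half.sub integrable_sq_exp
  have h0 := integral_eq_zero_of_hasDerivAt_of_integrable hderiv hint integrable_mul_exp_half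
  rw [integral_sub integrable_exp_half integrable_sq_exp, sub_eq_zero] at h0
  rw [← h0, exp_integral]


lemma integrable_sq_gauss : Integrable (fun z : ℝ => z ^ 2) (gaussianReal 0 1) := by
  rw [gaussianReal_of_var_ne_zero _ one_ne_zero,
    integrable_withDensity_iff (measurable_gaussianPDF 0 1)
      (ae_of_all _ fun x => ENNReal.ofReal_lt_top)]
  have e : (fun x : ℝ => x ^ 2 * (gaussianPDF 0 1 x).toReal)
      = fun x : ℝ => (Real.sqrt (2 * π))⁻¹ * (x ^ 2 * Real.exp (-x ^ 2 / 2)) := by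
    funext x
    rw [gaussianPDF, ENNReal.toReal_ofReal (gaussianPDFReal_nonneg 0 1 x), pdf_eq]
    ring
  rw [e]
  exact integrable_sq_exp.const_mul _

lemma second_moment : ∫ z : ℝ, z ^ 2 ∂(gaussianReal 0 1) = 1 := by
  rw [integral_gauss]
  have e : (fun z : ℝ => gaussianPDFReal 0 1 z * z ^ 2)
      = fun z : ℝ => (Real.sqrt (2 * π))⁻¹ * (z ^ 2 * Real.exp (-z ^ 2 / 2)) := by
    funext z; rw [pdf_eq]; ring
  rw [e, integral_const_mul, sq_exp_integral, inv_mul_cancel₀]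
  positivity

lemma integrable_abs_gauss : Integrable (fun z : ℝ => |z|) (gaussianReal 0 1) := by
  refine Integrable.mono' ((integrable_const 1).add integrable_sq_gauss)
    continuous_abs.aestronglyMeasurable (ae_of_all _ fun z => ?_)
  simp only [Real.norm_eq_abs, abs_abs, Pi.add_apply]
  nlinarith [abs_nonneg z, sq_abs z, sq_nonneg (|z| - 1)]

lemma gauss_map_neg : (gaussianReal 0 1).map (fun z : ℝ => -z) = gaussianReal 0 1 := by
  have h := gaussianReal_map_const_mul (μ := 0) (v := 1) (-1)
  have e : (fun z : ℝ => -1 * z) = fun z : ℝ => -z := by funext z; ring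
  rw [e] at h
  rw [h]
  norm_num

lemma integral_comp_neg_gauss (g : ℝ → ℝ)
    (hg : AEStronglyMeasurable g (gaussianReal 0 1)) :
    ∫ z, g (-z) ∂(gaussianReal 0 1) = ∫ z, g z ∂(gaussianReal 0 1) := by
  conv_rhs => rw [← gauss_map_neg]
  rw [integral_map measurable_neg.aemeasurable]
  rw [gauss_map_neg]
  exact hg

lemma soft_eq (y c : ℝ) (hc : 0 ≤ c) :
    Real.sign y * max (|y| - c) 0 = y - max (min y c) (-c) := by
  rcases lt_trichotomy y 0 with hy | hy | hy
  · rw [Real.sign_of_neg hy, abs_of_neg hy]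
    rcases le_total (-c) y with h | h
    · rw [max_eq_right (by linarith), min_eq_left (by linarith), max_eq_left h]; ring
    · rw [max_eq_left (by linarith), min_eq_left (by linarith), max_eq_right h]; ring
  · subst hy
    simp [min_eq_left hc, max_eq_left (neg_nonpos.mpr hc)]
  · rw [Real.sign_of_pos hy, abs_of_pos hy]
    rcases le_total y c with h | h
    · rw [max_eq_right (by linarith), min_eq_left h, max_eq_left (by linarith)]; ring
    · rw [max_eq_left (by linarith), min_eq_right h, max_eq_left (by linarith)]; ring

lemma ptwise1 (σ t θ z : ℝ) (hσ : 0 < σ) (ht : 0 ≤ t) :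
    (σ * z - max (min (θ + σ * z) (σ * t)) (-(σ * t))) ^ 2
      ≤ 2 * θ ^ 2 + σ ^ 2 * (max (|z| - t) 0) ^ 2 := by
  have hM0 : 0 ≤ max (|z| - t) 0 := le_max_right _ _
  have hMsq : 0 ≤ σ ^ 2 * (max (|z| - t) 0) ^ 2 := by positivity
  rcases le_total (θ + σ * z) (σ * t) with h1 | h1
  · rcases le_total (-(σ * t)) (θ + σ * z) with h2 | h2
    · rw [min_eq_left h1, max_eq_left h2]
      nlinarith [sq_nonneg θ]
    · rw [min_eq_left h1, max_eq_right h2]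
      rcases le_total z (-t) with h3 | h3
      · have hz : z ≤ 0 := by linarith
        rw [abs_of_nonpos hz, max_eq_left (by linarith)]
        nlinarith [sq_nonneg θ]
      · have hu : 0 ≤ σ * (z + t) := mul_nonneg hσ.le (by linarith)
        nlinarith [mul_nonneg (by linarith : (0:ℝ) ≤ -(θ + σ * (z + t)))
          (by linarith : (0:ℝ) ≤ σ * (z + t) - θ)]
  · have hst : -(σ * t) ≤ σ * t := by nlinarith [mul_nonneg hσ.le ht]
    rw [min_eq_right h1, max_eq_left hst]
    rcases le_total t z with h3 | h3
    · have hz : 0 ≤ z := le_trans ht h3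
      rw [abs_of_nonneg hz, max_eq_left (by linarith)]
      nlinarith [sq_nonneg θ]
    · have hu : 0 ≤ σ * (t - z) := mul_nonneg hσ.le (by linarith)
      nlinarith [mul_nonneg (by linarith : (0:ℝ) ≤ θ - σ * (t - z))
        (by linarith : (0:ℝ) ≤ θ + σ * (t - z))]


noncomputable def K (u : ℝ) : ℝ :=
  (Real.sqrt (2 * π))⁻¹ * ((max u 0) ^ 2 * Real.exp (-(max u 0) ^ 2 / 2))

lemma K_nonneg (u : ℝ) : 0 ≤ K u := by
  unfold K; positivity

lemma K_continuous : Continuous K := by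
  unfold K
  fun_prop

lemma K_integrable : Integrable K := by
  refine Integrable.mono' (integrable_sq_exp.const_mul (Real.sqrt (2 * π))⁻¹)
    K_continuous.aestronglyMeasurable (ae_of_all _ fun u => ?_)
  rw [Real.norm_eq_abs, abs_of_nonneg (K_nonneg u)]
  unfold K
  rcases le_total u 0 with h | h
  · rw [max_eq_right h]
    norm_num
    positivity
  · rw [max_eq_left h]

lemma K_add_K_neg (z : ℝ) :
    K z + K (-z) = (Real.sqrt (2 * π))⁻¹ * (z ^ 2 * Real.exp (-z ^ 2 / 2)) := by
  unfold K
  rcases le_total z 0 with h | h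
  · rw [max_eq_right h, max_eq_left (by linarith)]
    ring_nf
  · rw [max_eq_left h, max_eq_right (by linarith)]
    ring_nf

lemma K_int_eq : ∫ u : ℝ, K u = 1 / 2 := by
  have h2 : ∫ u : ℝ, (K u + K (-u)) = 1 := by
    have e : (fun u : ℝ => K u + K (-u))
        = fun u : ℝ => (Real.sqrt (2 * π))⁻¹ * (u ^ 2 * Real.exp (-u ^ 2 / 2)) := by
      funext u; exact K_add_K_neg u
    rw [e, integral_const_mul, sq_exp_integral, inv_mul_cancel₀]
    positivity
  have hneg : Integrable (fun u : ℝ => K (-u)) := K_integrable.comp_neg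
  rw [integral_add K_integrable hneg, integral_neg_eq_self] at h2
  linarith

lemma tail_moment_le {t B : ℝ} (ht : 0 ≤ t) (hB : 0 < B)
    (hexp : Real.exp (-t ^ 2 / 2) = 1 / B) :
    ∫ z, (max (|z| - t) 0) ^ 2 ∂(gaussianReal 0 1) ≤ 1 / B := by
  have hBinv : (0:ℝ) ≤ 1 / B := by positivity
  rw [integral_gauss]
  have hKt : Integrable (fun z : ℝ => K (z - t)) := by
    have h := K_integrable.comp_add_right (-t)
    have e : (fun z : ℝ => K (z + -t)) = fun z : ℝ => K (z - t) := by
      funext z; rw [sub_eq_add_neg]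
    rwa [e] at h
  have hKnt : Integrable (fun z : ℝ => K (-z - t)) := by
    have h := (K_integrable.comp_neg).comp_add_right t
    have e : (fun z : ℝ => K (-(z + t))) = fun z : ℝ => K (-z - t) := by
      funext z; ring_nf
    rwa [e] at h
  have hLHSint : Integrable (fun z : ℝ => gaussianPDFReal 0 1 z * (max (|z| - t) 0) ^ 2) := by
    refine Integrable.mono' (integrable_sq_exp.const_mul (Real.sqrt (2 * π))⁻¹)
      (((measurable_gaussianPDFReal 0 1).mul
        (by fun_prop : Continuous fun z : ℝ => (max (|z| - t) 0) ^ 2).measurable).aestronglyMeasurable)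
      (ae_of_all _ fun z => ?_)
    have h1 : 0 ≤ gaussianPDFReal 0 1 z := gaussianPDFReal_nonneg 0 1 z
    have h2 : (max (|z| - t) 0) ^ 2 ≤ z ^ 2 := by
      have : max (|z| - t) 0 ≤ |z| := max_le (by linarith [abs_nonneg z]) (abs_nonneg z)
      nlinarith [le_max_right (|z| - t) (0:ℝ), sq_abs z]
    rw [Real.norm_eq_abs, abs_of_nonneg (by positivity)]
    calc gaussianPDFReal 0 1 z * (max (|z| - t) 0) ^ 2
        ≤ gaussianPDFReal 0 1 z * z ^ 2 := by
          exact mul_le_mul_of_nonneg_left h2 h1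
      _ = (Real.sqrt (2 * π))⁻¹ * (z ^ 2 * Real.exp (-z ^ 2 / 2)) := by rw [pdf_eq]; ring
  have hmono : ∫ z, gaussianPDFReal 0 1 z * (max (|z| - t) 0) ^ 2
      ≤ ∫ z, (1 / B) * (K (z - t) + K (-z - t)) := by
    refine integral_mono hLHSint (((hKt.add hKnt).const_mul _)) fun z => ?_
    rcases le_total (|z|) t with hzt | hzt
    · rw [max_eq_right (by linarith)]
      have := K_nonneg (z - t)
      have := K_nonneg (-z - t)
      nlinarith
    · rcases abs_cases z with ⟨hz, hz0⟩ | ⟨hz, hz0⟩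
      · -- z ≥ 0, so z ≥ t
        rw [hz] at hzt ⊢
        rw [max_eq_left (by linarith)]
        have hK2 : K (-z - t) = 0 := by
          unfold K
          rw [max_eq_right (by linarith)]
          norm_num
        have hK1 : K (z - t) = (Real.sqrt (2 * π))⁻¹ *
            ((z - t) ^ 2 * Real.exp (-(z - t) ^ 2 / 2)) := by
          unfold K
          rw [max_eq_left (by linarith)]
        rw [hK1, hK2, pdf_eq, add_zero]
        have key : Real.exp (-z ^ 2 / 2) ≤ (1 / B) * Real.exp (-(z - t) ^ 2 / 2) := by
          rw [← hexp, ← Real.exp_add]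
          apply Real.exp_le_exp.mpr
          nlinarith [mul_nonneg ht (by linarith : (0:ℝ) ≤ z - t)]
        have hmul := mul_le_mul_of_nonneg_left key
          (mul_nonneg (by positivity : (0:ℝ) ≤ (Real.sqrt (2 * π))⁻¹) (sq_nonneg (z - t)))
        nlinarith [hmul]
      · -- z < 0, |z| = -z ≥ t
        rw [hz] at hzt ⊢
        rw [max_eq_left (by linarith)]
        have hK2 : K (z - t) = 0 := by
          unfold K
          rw [max_eq_right (by linarith)]
          norm_num
        have hK1 : K (-z - t) = (Real.sqrt (2 * π))⁻¹ *
            ((-z - t) ^ 2 * Real.exp (-(-z - t) ^ 2 / 2)) := by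
          unfold K
          rw [max_eq_left (by linarith)]
        rw [hK1, hK2, pdf_eq, zero_add]
        have key : Real.exp (-z ^ 2 / 2) ≤ (1 / B) * Real.exp (-(-z - t) ^ 2 / 2) := by
          rw [← hexp, ← Real.exp_add]
          apply Real.exp_le_exp.mpr
          nlinarith [mul_nonneg ht (by linarith : (0:ℝ) ≤ -z - t)]
        have hmul := mul_le_mul_of_nonneg_left key
          (mul_nonneg (by positivity : (0:ℝ) ≤ (Real.sqrt (2 * π))⁻¹) (sq_nonneg (-z - t)))
        nlinarith [hmul]
  refine hmono.trans (le_of_eq ?_)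
  rw [integral_const_mul, integral_add hKt hKnt]
  have e1 : ∫ z : ℝ, K (z - t) = ∫ u : ℝ, K u := integral_sub_right_eq_self K t
  have e2 : ∫ z : ℝ, K (-z - t) = ∫ u : ℝ, K u := by
    have e : (fun z : ℝ => K (-z - t)) = fun z : ℝ => (fun w => K (-w)) (z + t) := by
      funext z; simp; ring_nf
    rw [e, integral_add_right_eq_self (fun w : ℝ => K (-w)) t, integral_neg_eq_self]
  rw [e1, e2, K_int_eq]
  ring

end Stmt8Aux

/-- Soft-thresholding risk bound: for `y = θ + σz`, `z ~ N(0,1)`,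
`δ = sgn(y)(|y| - σt)₊` with `t = √(2 log B)`, `B > 1`,
`E(δ - θ)² ≤ min{2θ², σ²(1 + 2 log B)} + σ²/B`. -/
theorem stmt8 (σ B θ : ℝ) (hσ : 0 < σ) (hB : 1 < B) :
    ∫ z : ℝ,
        (Real.sign (θ + σ * z) *
            max (|θ + σ * z| - σ * Real.sqrt (2 * Real.log B)) 0 - θ) ^ 2
        ∂(gaussianReal 0 1) ≤
      min (2 * θ ^ 2) (σ ^ 2 * (1 + 2 * Real.log B)) + σ ^ 2 / B := by
  have hlog : 0 < Real.log B := Real.log_pos hB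
  have hB0 : 0 < B := lt_trans one_pos hB
  set t : ℝ := Real.sqrt (2 * Real.log B) with ht_def
  have ht : 0 ≤ t := Real.sqrt_nonneg _
  have ht2 : t ^ 2 = 2 * Real.log B := Real.sq_sqrt (by positivity)
  have hexp : Real.exp (-t ^ 2 / 2) = 1 / B := by
    rw [ht2, show -(2 * Real.log B) / 2 = -Real.log B by ring, Real.exp_neg,
      Real.exp_log hB0, one_div]
  set c : ℝ → ℝ := fun z => max (min (θ + σ * z) (σ * t)) (-(σ * t)) with hc_def
  have hc_cont : Continuous c := by
    rw [hc_def]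
    exact ((continuous_const.add (continuous_const.mul continuous_id)).min
      continuous_const).max continuous_const
  have hst : -(σ * t) ≤ σ * t := by nlinarith [mul_nonneg hσ.le ht]
  have hc_bound : ∀ z, |c z| ≤ σ * t := by
    intro z
    simp only [hc_def]
    exact abs_le.mpr ⟨le_max_right _ _, max_le ((min_le_right _ _)) hst⟩
  have hc_mono : ∀ a b : ℝ, a ≤ b → c a ≤ c b := by
    intro a b hab
    simp only [hc_def]
    have h1 : θ + σ * a ≤ θ + σ * b := by nlinarith
    exact max_le_max (min_le_min h1 le_rfl) le_rfl
  have hFc : ∀ z : ℝ, (Real.sign (θ + σ * z) * max (|θ + σ * z| - σ * t) 0 - θ) ^ 2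
      = (σ * z - c z) ^ 2 := by
    intro z
    rw [Stmt8Aux.soft_eq _ _ (mul_nonneg hσ.le ht)]
    simp only [hc_def]
    ring
  have hI : ∫ z : ℝ, (Real.sign (θ + σ * z) * max (|θ + σ * z| - σ * t) 0 - θ) ^ 2
        ∂(gaussianReal 0 1)
      = ∫ z : ℝ, (σ * z - c z) ^ 2 ∂(gaussianReal 0 1) :=
    integral_congr_ae (ae_of_all _ fun z => hFc z)
  rw [hI]
  -- integrability facts
  have I_sq := Stmt8Aux.integrable_sq_gauss
  have I_abs := Stmt8Aux.integrable_abs_gauss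
  have I_zc : Integrable (fun z : ℝ => z * c z) (gaussianReal 0 1) := by
    refine Integrable.mono' (I_abs.const_mul (σ * t))
      ((continuous_id.mul hc_cont).aestronglyMeasurable) (ae_of_all _ fun z => ?_)
    rw [Real.norm_eq_abs, abs_mul]
    calc |z| * |c z| ≤ |z| * (σ * t) :=
          mul_le_mul_of_nonneg_left (hc_bound z) (abs_nonneg z)
      _ = σ * t * |z| := by ring
  have I_zcneg : Integrable (fun z : ℝ => -z * c (-z)) (gaussianReal 0 1) := by
    refine Integrable.mono' (I_abs.const_mul (σ * t))
      ((continuous_id.neg.mul (hc_cont.comp continuous_neg)).aestronglyMeasurable)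
      (ae_of_all _ fun z => ?_)
    rw [Real.norm_eq_abs, abs_mul, abs_neg]
    calc |z| * |c (-z)| ≤ |z| * (σ * t) :=
          mul_le_mul_of_nonneg_left (hc_bound (-z)) (abs_nonneg z)
      _ = σ * t * |z| := by ring
  have I_c2 : Integrable (fun z : ℝ => (c z) ^ 2) (gaussianReal 0 1) := by
    refine Integrable.mono' (integrable_const ((σ * t) ^ 2))
      ((hc_cont.pow 2).aestronglyMeasurable) (ae_of_all _ fun z => ?_)
    rw [Real.norm_eq_abs, abs_pow]
    exact pow_le_pow_left₀ (abs_nonneg _) (hc_bound z) 2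
  have I_M2 : Integrable (fun z : ℝ => (max (|z| - t) 0) ^ 2) (gaussianReal 0 1) := by
    refine Integrable.mono' I_sq
      (((continuous_abs.sub continuous_const).max continuous_const).pow 2
        |>.aestronglyMeasurable) (ae_of_all _ fun z => ?_)
    rw [Real.norm_eq_abs, abs_pow]
    have h1 : max (|z| - t) 0 ≤ |z| := max_le (by linarith [abs_nonneg z]) (abs_nonneg z)
    have h2 : 0 ≤ max (|z| - t) 0 := le_max_right _ _
    rw [abs_of_nonneg h2]
    nlinarith [sq_abs z]
  -- branch 1
  have hM : ∫ z : ℝ, (max (|z| - t) 0) ^ 2 ∂(gaussianReal 0 1) ≤ 1 / B :=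
    Stmt8Aux.tail_moment_le ht hB0 hexp
  have hM0 : 0 ≤ ∫ z : ℝ, (max (|z| - t) 0) ^ 2 ∂(gaussianReal 0 1) :=
    integral_nonneg fun z => sq_nonneg _
  have b1 : ∫ z : ℝ, (σ * z - c z) ^ 2 ∂(gaussianReal 0 1) ≤ 2 * θ ^ 2 + σ ^ 2 / B := by
    have h := integral_mono_of_nonneg (ae_of_all _ fun z => sq_nonneg (σ * z - c z))
      ((integrable_const (2 * θ ^ 2)).add (I_M2.const_mul (σ ^ 2)))
      (ae_of_all _ fun z => by
        simp only [hc_def, Pi.add_apply]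
        exact Stmt8Aux.ptwise1 σ t θ z hσ ht)
    simp only [Pi.add_apply] at h
    rw [integral_add (integrable_const _) (I_M2.const_mul _), integral_const,
      integral_const_mul] at h
    simp only [measure_univ, probReal_univ, ENNReal.toReal_one, smul_eq_mul, one_mul] at h
    have h2 : σ ^ 2 * ∫ z : ℝ, (max (|z| - t) 0) ^ 2 ∂(gaussianReal 0 1)
        ≤ σ ^ 2 * (1 / B) := by nlinarith
    calc ∫ z : ℝ, (σ * z - c z) ^ 2 ∂(gaussianReal 0 1)
        ≤ 2 * θ ^ 2 + σ ^ 2 * ∫ z : ℝ, (max (|z| - t) 0) ^ 2 ∂(gaussianReal 0 1) := h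
      _ ≤ 2 * θ ^ 2 + σ ^ 2 * (1 / B) := by linarith
      _ = 2 * θ ^ 2 + σ ^ 2 / B := by ring
  -- branch 2
  have hsplit : ∫ z : ℝ, (σ * z - c z) ^ 2 ∂(gaussianReal 0 1)
      = σ ^ 2 * (∫ z : ℝ, z ^ 2 ∂(gaussianReal 0 1))
        - 2 * σ * (∫ z : ℝ, z * c z ∂(gaussianReal 0 1))
        + ∫ z : ℝ, (c z) ^ 2 ∂(gaussianReal 0 1) := by
    have e : (fun z : ℝ => (σ * z - c z) ^ 2)
        = fun z : ℝ => (σ ^ 2 * z ^ 2 - 2 * σ * (z * c z)) + (c z) ^ 2 := by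
      funext z; ring
    rw [e, integral_add (show Integrable (fun z : ℝ => σ ^ 2 * z ^ 2 - 2 * σ * (z * c z))
        (gaussianReal 0 1) from (I_sq.const_mul _).sub (I_zc.const_mul _)) I_c2]
    rw [integral_sub (I_sq.const_mul _) (I_zc.const_mul _), integral_const_mul,
      integral_const_mul]
  have hS : 0 ≤ ∫ z : ℝ, z * c z ∂(gaussianReal 0 1) := by
    have hneg : ∫ z : ℝ, -z * c (-z) ∂(gaussianReal 0 1)
        = ∫ z : ℝ, z * c z ∂(gaussianReal 0 1) := by
      have h := Stmt8Aux.integral_comp_neg_gauss (fun z => z * c z)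
        ((continuous_id.mul hc_cont).aestronglyMeasurable)
      simpa using h
    have hsum : 0 ≤ ∫ z : ℝ, (z * c z + -z * c (-z)) ∂(gaussianReal 0 1) := by
      refine integral_nonneg fun z => ?_
      simp only [Pi.zero_apply]
      rcases le_total 0 z with hz | hz
      · have hm : c (-z) ≤ c z := hc_mono _ _ (by linarith)
        nlinarith [mul_nonneg hz (sub_nonneg.mpr hm)]
      · have hm : c z ≤ c (-z) := hc_mono _ _ (by linarith)
        nlinarith [mul_nonneg (neg_nonneg.mpr hz) (sub_nonneg.mpr hm)]
    rw [integral_add I_zc I_zcneg, hneg] at hsum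
    linarith
  have hC : ∫ z : ℝ, (c z) ^ 2 ∂(gaussianReal 0 1) ≤ σ ^ 2 * t ^ 2 := by
    have h := integral_mono I_c2 (integrable_const ((σ * t) ^ 2)) (fun z => by
      have hb := hc_bound z
      nlinarith [sq_abs (c z), abs_nonneg (c z)])
    rw [integral_const] at h
    simp only [measure_univ, probReal_univ, ENNReal.toReal_one, smul_eq_mul, one_mul] at h
    nlinarith [h]
  have b2 : ∫ z : ℝ, (σ * z - c z) ^ 2 ∂(gaussianReal 0 1)
      ≤ σ ^ 2 * (1 + 2 * Real.log B) := by
    rw [hsplit, Stmt8Aux.second_moment]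
    have he : σ ^ 2 * (1 + 2 * Real.log B) = σ ^ 2 * 1 + σ ^ 2 * t ^ 2 := by
      rw [ht2]; ring
    rw [he]
    nlinarith [mul_nonneg hσ.le hS]
  have hfinal : min (2 * θ ^ 2) (σ ^ 2 * (1 + 2 * Real.log B)) + σ ^ 2 / B
      = min (2 * θ ^ 2 + σ ^ 2 / B) (σ ^ 2 * (1 + 2 * Real.log B) + σ ^ 2 / B) :=
    (min_add_add_right _ _ _).symm
  rw [hfinal]
  refine le_min b1 (b2.trans ?_)
  have : 0 ≤ σ ^ 2 / B := by positivity
  linarith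
end
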